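/- Let H be a maximal dissipative operator on a Hilbert space with resolvent R(z) for Im z > 0. Then for every m ∈ ℕ* and n ∈ ℕ, R^{n+1}(z) can be written as a finite sum of terms of the form (z−i)^β R^{n+1+β}(i) with β ∈ ℕ, or of the form (z−i)^{2m−n−1+ν} R^m(i) R^ν(z) R^m(i) with max(1, n+1−2m) ≤ ν ≤ n+1. -/

import Mathlib

open Complex

/-- `R` is a two-sided bounded inverse of `H - z`. -/
def IsResolventAt {𝓗 : Type*} [NormedAddCommGroup 𝓗] [InnerProductSpace ℂ 𝓗]
    (D : Submodule ℂ 𝓗) (H : D →ₗ[ℂ] 𝓗) (z : ℂ) (R : 𝓗 →L[ℂ] 𝓗) : Prop :=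
  (∀ φ : D, R (H φ - z • (φ : 𝓗)) = φ) ∧
  (∀ u : 𝓗, ∃ φ : D, (φ : 𝓗) = R u ∧ H φ - z • (φ : 𝓗) = u)

/-- Let `H` be maximal dissipative with resolvent `R(z)` for `Im z > 0`.
For every `m ≥ 1` and `n`, `R(z)^{n+1}` is a finite sum of terms of the form
`(z-i)^β R(i)^{n+1+β}` with `β ∈ ℕ`, or `(z-i)^{2m-n-1+ν} R(i)^m R(z)^ν R(i)^m`
with `max(1, n+1-2m) ≤ ν ≤ n+1`. -/
theorem stmt14 {𝓗 : Type*} [NormedAddCommGroup 𝓗] [InnerProductSpace ℂ 𝓗] [CompleteSpace 𝓗]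
    (D : Submodule ℂ 𝓗) (hdense : Dense (D : Set 𝓗))
    (H : D →ₗ[ℂ] 𝓗)
    (hdiss : ∀ φ : D, (inner ℂ (H φ) (φ : 𝓗) : ℂ).im ≤ 0)
    (R : ℂ → 𝓗 →L[ℂ] 𝓗)
    (hres : ∀ z : ℂ, 0 < z.im → IsResolventAt D H z (R z)) :
    ∀ (z : ℂ), 0 < z.im → ∀ (m : ℕ), 1 ≤ m → ∀ (n : ℕ),
      (R z) ^ (n + 1) ∈ AddSubmonoid.closure
        {T : 𝓗 →L[ℂ] 𝓗 |
          (∃ β : ℕ, T = (z - Complex.I) ^ β • (R Complex.I) ^ (n + 1 + β)) ∨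
          (∃ ν : ℕ, max 1 (n + 1 - 2 * m) ≤ ν ∧ ν ≤ n + 1 ∧
            T = (z - Complex.I) ^ (2 * m + ν - (n + 1)) •
              ((R Complex.I) ^ m * (R z) ^ ν * (R Complex.I) ^ m))} := by
  intro z hz m hm n
  set A := R Complex.I with hA
  set B := R z with hB
  set w := z - Complex.I with hw
  have hIi : (0:ℝ) < Complex.I.im := by simp
  obtain ⟨hi1, hi2⟩ := hres Complex.I hIi
  obtain ⟨hz1, hz2⟩ := hres z hz
  -- first resolvent identity: B = A + w • (A * B)
  have key1 : B = A + w • (A * B) := by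
    ext u
    obtain ⟨φ, hφ1, hφ2⟩ := hz2 u
    have h1 : H φ - Complex.I • (φ:𝓗) = u + w • (φ:𝓗) := by
      rw [hw, sub_smul, ← hφ2]; abel
    have h2 := hi1 φ
    rw [h1] at h2
    simp only [map_add, map_smul] at h2
    have h2A : A u + w • A ((φ:𝓗)) = (φ:𝓗) := h2
    have hφ1A : (φ : 𝓗) = B u := hφ1
    show B u = A u + w • A (B u)
    rw [← hφ1A]
    exact h2A.symm
  -- second resolvent identity: B = A + w • (B * A)
  have key2 : B = A + w • (B * A) := by
    ext u
    obtain ⟨ψ, hψ1, hψ2⟩ := hi2 u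
    have h1 : H ψ - z • (ψ:𝓗) = u - w • (ψ:𝓗) := by
      rw [hw, sub_smul, ← hψ2]; abel
    have h2 := hz1 ψ
    rw [h1] at h2
    simp only [map_sub, map_smul] at h2
    have h2B : B u - w • B ((ψ:𝓗)) = (ψ:𝓗) := h2
    have hψ1A : (ψ : 𝓗) = A u := hψ1
    show B u = A u + w • B (A u)
    rw [← hψ1A]
    exact sub_eq_iff_eq_add.mp h2B
  have hc : Commute A B := by
    by_cases hw0 : w = 0
    · have hBA : B = A := by rw [key1, hw0, zero_smul, add_zero]
      rw [hBA]
    · have h : w • (A * B) = w • (B * A) := add_left_cancel (key1.symm.trans key2)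
      exact smul_right_injective (𝓗 →L[ℂ] 𝓗) hw0 h
  -- the substitution step
  have step : ∀ a b : ℕ, A ^ a * B ^ (b + 1)
      = A ^ (a + 1) * B ^ b + w • (A ^ (a + 1) * B ^ (b + 1)) := by
    intro a b
    have h1 : A ^ a * B ^ b * A = A ^ (a + 1) * B ^ b := by
      rw [mul_assoc, ← (hc.pow_right b).eq, ← mul_assoc, ← pow_succ]
    have h2 : A ^ a * B ^ b * (A * B) = A ^ (a + 1) * B ^ (b + 1) := by
      rw [← mul_assoc, h1, mul_assoc, ← pow_succ]
    calc A ^ a * B ^ (b + 1) = A ^ a * B ^ b * B := by rw [mul_assoc, pow_succ]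
      _ = A ^ a * B ^ b * (A + w • (A * B)) := by rw [← key1]
      _ = A ^ (a + 1) * B ^ b + w • (A ^ (a + 1) * B ^ (b + 1)) := by
          rw [mul_add, mul_smul_comm, h1, h2]
  set S : Set (𝓗 →L[ℂ] 𝓗) :=
    {T : 𝓗 →L[ℂ] 𝓗 |
      (∃ β : ℕ, T = w ^ β • A ^ (n + 1 + β)) ∨
      (∃ ν : ℕ, max 1 (n + 1 - 2 * m) ≤ ν ∧ ν ≤ n + 1 ∧
        T = w ^ (2 * m + ν - (n + 1)) • (A ^ m * B ^ ν * A ^ m))} with hS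
  -- membership for pure-A terms
  have mem0 : ∀ a e : ℕ, a = n + 1 + e →
      w ^ e • (A ^ a * B ^ 0) ∈ AddSubmonoid.closure S := by
    intro a e hae
    apply AddSubmonoid.subset_closure
    left
    exact ⟨e, by rw [pow_zero, mul_one, hae]⟩
  -- main downward induction
  have main : ∀ k : ℕ, ∀ a b e : ℕ, a + k = 2 * m → a + b = n + 1 + e → b ≤ n + 1 →
      w ^ e • (A ^ a * B ^ b) ∈ AddSubmonoid.closure S := by
    intro k
    induction k with
    | zero =>
      intro a b e hk hab hb
      rcases b with _ | ν
      · exact mem0 a e (by omega)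
      · apply AddSubmonoid.subset_closure
        right
        refine ⟨ν + 1, ?_, hb, ?_⟩
        · rw [Nat.add_zero] at hk
          omega
        · have he : 2 * m + (ν + 1) - (n + 1) = e := by omega
          have hAm : A ^ m * B ^ (ν + 1) * A ^ m = A ^ a * B ^ (ν + 1) := by
            rw [mul_assoc, (hc.symm.pow_pow (ν + 1) m).eq, ← mul_assoc, ← pow_add]
            rw [Nat.add_zero] at hk
            congr 2
            omega
          rw [he, hAm]
    | succ k ih =>
      intro a b e hk hab hb
      rcases b with _ | b'
      · exact mem0 a e (by omega)
      · rw [step a b', smul_add]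
        apply AddSubmonoid.add_mem
        · exact ih (a + 1) b' e (by omega) (by omega) (by omega)
        · rw [smul_smul, ← pow_succ]
          exact ih (a + 1) (b' + 1) (e + 1) (by omega) (by omega) hb
  have := main (2 * m) 0 (n + 1) 0 (by omega) (by omega) le_rfl
  simpa using this
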